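/- Let G be a group with polynomial maximal subgroup growth exponent α (i.e., the number of maximal subgroups of index n is at most n^α for all n), and suppose every subgroup H of index n that is an intersection of maximal subgroups can be written as H = M₁ ∩ ⋯ ∩ M_t with |G:M₁|⋯|G:M_t| ≤ n^η. Then the number c_n(G) of index-n subgroups of G that are intersections of maximal subgroups satisfies c_n(G) ≤ (n^η(n^η+1)/2)·n^{ηα} for all n ≥ 2. -/

import Mathlib

open Finset

section Aux

lemma two_pow_length_le_prod {l : List ℕ} (h : ∀ d ∈ l, 2 ≤ d) :
    2 ^ l.length ≤ l.prod := by
  induction l with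
  | nil => simp
  | cons a t ih =>
    have ha := h a (by simp)
    have ht := ih (fun d hd => h d (by simp [hd]))
    simp only [List.length_cons, List.prod_cons, pow_succ]
    calc 2 ^ t.length * 2 ≤ t.prod * a := Nat.mul_le_mul ht ha
    _ = a * t.prod := Nat.mul_comm _ _

def listsLE {β : Type*} [DecidableEq β] (s : Finset β) : ℕ → Finset (List β)
  | 0 => {[]}
  | (L+1) => {[]} ∪ (s ×ˢ listsLE s L).image (fun p => p.1 :: p.2)

lemma mem_listsLE {β : Type*} [DecidableEq β] (s : Finset β) :
    ∀ (L : ℕ) (l : List β), l.length ≤ L → (∀ x ∈ l, x ∈ s) → l ∈ listsLE s L := by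
  intro L
  induction L with
  | zero =>
    intro l hl _
    have : l = [] := List.length_eq_zero_iff.mp (Nat.le_zero.mp hl)
    subst this; simp [listsLE]
  | succ L ih =>
    intro l hl hs
    cases l with
    | nil => simp [listsLE]
    | cons a t =>
      simp only [listsLE, Finset.mem_union, Finset.mem_image]
      refine Or.inr ⟨(a, t), Finset.mem_product.mpr ⟨hs a (by simp), ?_⟩, rfl⟩
      exact ih t (by simpa [Nat.succ_le_succ_iff] using hl) (fun x hx => hs x (by simp [hx]))

/-- The set of lists of naturals, all entries ≥ 2, with product at most `N`. -/
def WSet (N : ℕ) : Set (List ℕ) := {w | (∀ d ∈ w, 2 ≤ d) ∧ w.prod ≤ N}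

lemma WSet_finite (N : ℕ) : (WSet N).Finite := by
  apply Set.Finite.subset (Finset.finite_toSet (listsLE (Finset.Icc 2 N) N))
  rintro w ⟨h2, hprod⟩
  have hpow := two_pow_length_le_prod h2
  have hlen : w.length ≤ N := le_trans (le_of_lt (lt_of_lt_of_le Nat.lt_two_pow_self hpow)) hprod
  have hprodpos : 0 < w.prod := lt_of_lt_of_le (Nat.two_pow_pos _) hpow
  refine mem_listsLE _ N w hlen (fun d hd => Finset.mem_Icc.mpr ⟨h2 d hd, ?_⟩)
  exact le_trans (Nat.le_of_dvd hprodpos (List.dvd_prod hd)) hprod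

lemma ncard_biUnion_le {α ι : Type*} (s : Finset ι) (t : ι → Set α) :
    (⋃ i ∈ s, t i).ncard ≤ ∑ i ∈ s, (t i).ncard := by
  classical
  induction s using Finset.induction_on with
  | empty => simp
  | insert a s' h ih =>
    rw [Finset.set_biUnion_insert, Finset.sum_insert h]
    exact le_trans (Set.ncard_union_le _ _) (by omega)

lemma sum_inv_sq_le (N : ℕ) (hN : 1 ≤ N) :
    ∑ d ∈ Finset.Icc 2 N, (1:ℝ) / (d:ℝ)^2 ≤ 2/3 - 1/((N:ℝ) + 1/2) := by
  induction N, hN using Nat.le_induction with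
  | base => norm_num
  | succ N hN ih =>
    rw [Finset.sum_Icc_succ_top (by omega)]
    have hN1 : (1:ℝ) ≤ (N:ℝ) := by exact_mod_cast hN
    have h1 : (0:ℝ) < (N:ℝ) + 1/2 := by linarith
    have h2 : (0:ℝ) < (N:ℝ) + 1 + 1/2 := by linarith
    have key : (1:ℝ) / ((N:ℝ)+1)^2 ≤ 1/((N:ℝ) + 1/2) - 1/((N:ℝ) + 1 + 1/2) := by
      rw [div_sub_div _ _ (ne_of_gt h1) (ne_of_gt h2), div_le_div_iff₀ (by positivity) (by positivity)]
      ring_nf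
      nlinarith [sq_nonneg ((N:ℝ))]
    push_cast
    push_cast at ih key
    linarith

lemma sum_inv_le (N : ℕ) (hN : 1 ≤ N) :
    ∑ d ∈ Finset.Icc 2 N, (1:ℝ) / (d:ℝ) ≤ (N:ℝ)/3 + 1/6 := by
  induction N, hN using Nat.le_induction with
  | base => norm_num
  | succ N hN ih =>
    rw [Finset.sum_Icc_succ_top (by omega)]
    push_cast
    push_cast at ih
    rcases Nat.lt_or_ge N 2 with h | h
    · interval_cases N
      · norm_num
    · have hN2 : (2:ℝ) ≤ (N:ℝ) := by exact_mod_cast h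
      have : (1:ℝ)/((N:ℝ)+1) ≤ 1/3 := by
        rw [div_le_div_iff₀ (by linarith) (by norm_num)]; linarith
      linarith

lemma sumA (N : ℕ) (hN : 2 ≤ N) :
    (2:ℝ) + ∑ d ∈ Finset.Icc 2 N, ((N / d : ℕ) : ℝ) * (((N / d : ℕ) : ℝ) + 1)
      ≤ (N:ℝ) * ((N:ℝ) + 1) := by
  set x : ℝ := (N:ℝ) with hxdef
  have hx2 : (2:ℝ) ≤ x := by rw [hxdef]; exact_mod_cast hN
  have hterm : ∀ d ∈ Finset.Icc 2 N,
      ((N / d : ℕ) : ℝ) * (((N / d : ℕ) : ℝ) + 1) ≤ x^2 * (1/(d:ℝ)^2) + x * (1/(d:ℝ)) := by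
    intro d hd
    have hd2 : 2 ≤ d := (Finset.mem_Icc.mp hd).1
    have hdpos : (0:ℝ) < (d:ℝ) := by exact_mod_cast (by omega : 0 < d)
    have hq : ((N / d : ℕ) : ℝ) ≤ x / (d:ℝ) := Nat.cast_div_le
    have hq0 : (0:ℝ) ≤ ((N / d : ℕ) : ℝ) := by positivity
    have hxd : x^2 * (1/(d:ℝ)^2) + x * (1/(d:ℝ)) = (x/(d:ℝ)) * ((x/(d:ℝ)) + 1) := by
      field_simp
    rw [hxd]
    nlinarith [hq, hq0]
  have hsum := Finset.sum_le_sum hterm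
  have hsplit : ∑ d ∈ Finset.Icc 2 N, (x^2 * (1/(d:ℝ)^2) + x * (1/(d:ℝ)))
      = x^2 * (∑ d ∈ Finset.Icc 2 N, (1:ℝ)/(d:ℝ)^2) + x * (∑ d ∈ Finset.Icc 2 N, (1:ℝ)/(d:ℝ)) := by
    rw [Finset.sum_add_distrib, Finset.mul_sum, Finset.mul_sum]
  have hS2 := sum_inv_sq_le N (by omega)
  have hS1 := sum_inv_le N (by omega)
  have h1 : (0:ℝ) < x + 1/2 := by linarith
  set t : ℝ := 1/(x + 1/2) with htdef
  have ht : t * (x + 1/2) = 1 := by rw [htdef]; field_simp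
  have ht0 : 0 ≤ t := by positivity
  have hxt : x^2 * t = x - 1/2 + t/4 := by linear_combination (x - 1/2) * ht
  have hx20 : (0:ℝ) ≤ x^2 := sq_nonneg x
  have hx0 : (0:ℝ) ≤ x := by linarith
  have e2 : x^2 * (∑ d ∈ Finset.Icc 2 N, (1:ℝ)/(d:ℝ)^2) ≤ x^2 * (2/3 - t) :=
    mul_le_mul_of_nonneg_left hS2 hx20
  have e1 : x * (∑ d ∈ Finset.Icc 2 N, (1:ℝ)/(d:ℝ)) ≤ x * (x/3 + 1/6) :=
    mul_le_mul_of_nonneg_left hS1 hx0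
  nlinarith [hsum, hsplit, e2, e1, hxt, ht0, hx2]

lemma WSet_ncard_le : ∀ N : ℕ, 2 * (WSet N).ncard ≤ N * (N + 1) := by
  intro N
  induction N using Nat.strong_induction_on with
  | _ N ih =>
    rcases Nat.lt_or_ge N 1 with h0 | hN1
    · -- N = 0 : WSet 0 = ∅
      interval_cases N
      have : WSet 0 = ∅ := by
        ext w
        simp only [WSet, Set.mem_setOf_eq, Set.mem_empty_iff_false, iff_false, not_and]
        intro h2
        have := two_pow_length_le_prod h2
        have := Nat.two_pow_pos w.length
        omega
      simp [this]
    · -- recursion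
      have hsub : WSet N ⊆ insert []
          (⋃ d ∈ Finset.Icc 2 N, (fun w => d :: w) '' WSet (N / d)) := by
        rintro w ⟨h2, hprod⟩
        cases w with
        | nil => exact Set.mem_insert _ _
        | cons a w' =>
          refine Set.mem_insert_of_mem _ ?_
          have ha2 : 2 ≤ a := h2 a (by simp)
          have hpos : 0 < (a :: w').prod := by
            refine List.prod_pos (fun x hx => ?_)
            have := h2 x hx; omega
          have haN : a ≤ N :=
            le_trans (Nat.le_of_dvd hpos (List.dvd_prod (by simp))) hprod
          refine Set.mem_biUnion (Finset.mem_Icc.mpr ⟨ha2, haN⟩) ?_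
          refine ⟨w', ⟨fun d hd => h2 d (by simp [hd]), ?_⟩, rfl⟩
          rw [Nat.le_div_iff_mul_le (by omega : 0 < a)]
          calc w'.prod * a = (a :: w').prod := by rw [List.prod_cons]; ring
          _ ≤ N := hprod
      have hrec : (WSet N).ncard ≤ 1 + ∑ d ∈ Finset.Icc 2 N, (WSet (N / d)).ncard := by
        have hfin : (⋃ d ∈ Finset.Icc 2 N, (fun w => d :: w) '' WSet (N / d)).Finite :=
          Set.Finite.biUnion (Finset.finite_toSet _)
            (fun d _ => Set.Finite.image _ (WSet_finite _))
        calc (WSet N).ncard ≤ (insert ([] : List ℕ)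
              (⋃ d ∈ Finset.Icc 2 N, (fun w => d :: w) '' WSet (N / d))).ncard :=
              Set.ncard_le_ncard hsub (Set.Finite.insert _ hfin)
        _ ≤ (⋃ d ∈ Finset.Icc 2 N, (fun w => d :: w) '' WSet (N / d)).ncard + 1 :=
              Set.ncard_insert_le _ _
        _ ≤ (∑ d ∈ Finset.Icc 2 N, ((fun w => d :: w) '' WSet (N / d)).ncard) + 1 := by
              have := ncard_biUnion_le (Finset.Icc 2 N)
                (fun d => (fun w => d :: w) '' WSet (N / d))
              omega
        _ ≤ (∑ d ∈ Finset.Icc 2 N, (WSet (N / d)).ncard) + 1 := by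
              refine Nat.add_le_add_right (Finset.sum_le_sum fun d _ => ?_) 1
              exact Set.ncard_image_le (WSet_finite _)
        _ = 1 + ∑ d ∈ Finset.Icc 2 N, (WSet (N / d)).ncard := by ring
      rcases Nat.lt_or_ge N 2 with h1 | hN2
      · -- N = 1
        interval_cases N
        have he : Finset.Icc 2 1 = (∅ : Finset ℕ) := by decide
        rw [he, Finset.sum_empty] at hrec
        omega
      · -- N ≥ 2 : use sumA
        have hIH : ∀ d ∈ Finset.Icc 2 N, 2 * (WSet (N / d)).ncard ≤ (N / d) * (N / d + 1) := by
          intro d hd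
          have hd2 : 2 ≤ d := (Finset.mem_Icc.mp hd).1
          exact ih (N / d) (Nat.div_lt_self (by omega) (by omega))
        have step : 2 * (WSet N).ncard ≤ 2 + ∑ d ∈ Finset.Icc 2 N, (N / d) * (N / d + 1) := by
          calc 2 * (WSet N).ncard ≤ 2 * (1 + ∑ d ∈ Finset.Icc 2 N, (WSet (N / d)).ncard) :=
                Nat.mul_le_mul_left 2 hrec
          _ = 2 + ∑ d ∈ Finset.Icc 2 N, 2 * (WSet (N / d)).ncard := by
                rw [Nat.mul_add, Finset.mul_sum]
          _ ≤ 2 + ∑ d ∈ Finset.Icc 2 N, (N / d) * (N / d + 1) :=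
                Nat.add_le_add_left (Finset.sum_le_sum hIH) 2
        have cast_step : (2 * (WSet N).ncard : ℝ) ≤ (N:ℝ) * ((N:ℝ) + 1) := by
          calc (2 * (WSet N).ncard : ℝ)
              ≤ ((2 + ∑ d ∈ Finset.Icc 2 N, (N / d) * (N / d + 1) : ℕ) : ℝ) := by
                exact_mod_cast step
          _ = (2:ℝ) + ∑ d ∈ Finset.Icc 2 N, ((N / d : ℕ) : ℝ) * (((N / d : ℕ) : ℝ) + 1) := by
                push_cast; ring
          _ ≤ (N:ℝ) * ((N:ℝ) + 1) := sumA N hN2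
        exact_mod_cast cast_step

/-- Fibers: lists of elements lying in prescribed finsets according to an index list. -/
def FibF {β : Type*} [DecidableEq β] (Mk : ℕ → Finset β) : List ℕ → Finset (List β)
  | [] => {[]}
  | (k :: w) => ((Mk k) ×ˢ (FibF Mk w)).image (fun p => p.1 :: p.2)

lemma mem_FibF {β : Type*} [DecidableEq β] (Mk : ℕ → Finset β) (idx : β → ℕ)
    (P : β → Prop) (hMk : ∀ b, P b → b ∈ Mk (idx b)) :
    ∀ (l : List β), (∀ b ∈ l, P b) → l ∈ FibF Mk (l.map idx) := by
  intro l
  induction l with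
  | nil => intro _; simp [FibF]
  | cons a t ih =>
    intro h
    simp only [List.map_cons, FibF, Finset.mem_image]
    exact ⟨(a, t), Finset.mem_product.mpr ⟨hMk a (h a (by simp)),
      ih (fun b hb => h b (by simp [hb]))⟩, rfl⟩

lemma card_FibF {β : Type*} [DecidableEq β] (Mk : ℕ → Finset β) (α : ℝ) (hα : 0 ≤ α)
    (hcard : ∀ k, ((Mk k).card : ℝ) ≤ (k : ℝ) ^ α) :
    ∀ w : List ℕ, ((FibF Mk w).card : ℝ) ≤ ((w.prod : ℕ) : ℝ) ^ α := by
  intro w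
  induction w with
  | nil => simp [FibF]
  | cons k w ih =>
    have h1 : ((FibF Mk (k :: w)).card : ℝ) ≤ ((Mk k).card : ℝ) * ((FibF Mk w).card : ℝ) := by
      have := Finset.card_image_le (s := (Mk k) ×ˢ (FibF Mk w)) (f := fun p => p.1 :: p.2)
      rw [Finset.card_product] at this
      exact_mod_cast this
    have h2 : ((Mk k).card : ℝ) * ((FibF Mk w).card : ℝ)
        ≤ (k:ℝ)^α * ((w.prod : ℕ):ℝ)^α :=
      mul_le_mul (hcard k) ih (by positivity) (Real.rpow_nonneg (by positivity) _)
    have h3 : (k:ℝ)^α * ((w.prod : ℕ):ℝ)^α = (((k :: w).prod : ℕ):ℝ)^α := by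
      rw [← Real.mul_rpow (by positivity) (by positivity)]
      norm_num [List.prod_cons]
    calc ((FibF Mk (k :: w)).card : ℝ) ≤ _ := h1
    _ ≤ _ := h2
    _ = _ := h3

end Aux


/-- A subgroup is a *maximal intersection* if it is an intersection of finitely
many maximal subgroups (the empty intersection giving the whole group). -/
def IsMaximalIntersection {G : Type*} [Group G] (H : Subgroup G) : Prop :=
  ∃ s : Finset (Subgroup G), (∀ M ∈ s, IsCoatom M) ∧ H = s.inf id

/-- Suppose `G` has polynomial maximal subgroup growth with exponent `α`
(the maximal subgroups of index `k` form a finite set of size at most `k^α`),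
and suppose every subgroup of index `n` which is an intersection of maximal
subgroups can be written as `M₁ ∩ ⋯ ∩ M_t` with `|G:M₁|⋯|G:M_t| ≤ n^η`.
Then the set of index-`n` subgroups of `G` that are intersections of maximal
subgroups is finite of size at most `(n^η(n^η+1)/2)·n^(ηα)`, for `n ≥ 2`. -/
theorem card_maximal_intersections_le
    (G : Type*) [Group G] (α η : ℝ) (hα : 0 ≤ α) (hη : 0 ≤ η)
    (hmax : ∀ k : ℕ, {M : Subgroup G | IsCoatom M ∧ M.index = k}.Finite ∧
      ({M : Subgroup G | IsCoatom M ∧ M.index = k}.ncard : ℝ) ≤ (k : ℝ) ^ α)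
    (n : ℕ) (hn : 2 ≤ n)
    (hint : ∀ H : Subgroup G, H.index = n → IsMaximalIntersection H →
      ∃ (t : ℕ) (M : Fin t → Subgroup G), (∀ i, IsCoatom (M i)) ∧
        H = ⨅ i, M i ∧ (∏ i, ((M i).index : ℝ)) ≤ (n : ℝ) ^ η) :
    {H : Subgroup G | H.index = n ∧ IsMaximalIntersection H}.Finite ∧
      ({H : Subgroup G | H.index = n ∧ IsMaximalIntersection H}.ncard : ℝ) ≤
        ((n : ℝ) ^ η * ((n : ℝ) ^ η + 1) / 2) * (n : ℝ) ^ (η * α) := by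
  classical
  set x : ℝ := (n:ℝ)^η with hxdef
  have hn1 : (1:ℝ) ≤ (n:ℝ) := by exact_mod_cast (by omega : 1 ≤ n)
  have hx1 : (1:ℝ) ≤ x := by
    rw [hxdef]
    calc (1:ℝ) = 1 ^ η := (Real.one_rpow η).symm
    _ ≤ (n:ℝ)^η := Real.rpow_le_rpow zero_le_one hn1 hη
  set N := ⌊x⌋₊ with hNdef
  have hNx : (N:ℝ) ≤ x := Nat.floor_le (by linarith)
  set Mk : ℕ → Finset (Subgroup G) := fun k => (hmax k).1.toFinset with hMkdef
  have hMkmem : ∀ (k : ℕ) (M : Subgroup G), IsCoatom M ∧ M.index = k → M ∈ Mk k := by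
    intro k M h
    exact (Set.Finite.mem_toFinset _).mpr h
  have hMkcard : ∀ k, ((Mk k).card : ℝ) ≤ (k:ℝ)^α := by
    intro k
    have h := (hmax k).2
    rwa [Set.ncard_eq_toFinset_card _ (hmax k).1] at h
  set S := {H : Subgroup G | H.index = n ∧ IsMaximalIntersection H} with hSdef
  -- choose a witnessing list for each H in S
  have key : ∀ H : Subgroup G, ∃ l : List (Subgroup G),
      H ∈ S → ((∀ M ∈ l, IsCoatom M) ∧ (∀ M ∈ l, 2 ≤ M.index) ∧
        (l.map Subgroup.index).prod ≤ N ∧ sInf {K | K ∈ l} = H) := by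
    intro H
    by_cases hH : H ∈ S
    · obtain ⟨t, M, hM, hHeq, hprod⟩ := hint H hH.1 hH.2
      have hrange : {K | K ∈ List.ofFn M} = Set.range M := by
        ext K; simp [List.mem_ofFn]
      refine ⟨List.ofFn M, fun _ => ⟨?_, ?_, ?_, ?_⟩⟩
      · intro M' hM'
        obtain ⟨i, rfl⟩ := Set.mem_range.mp (hrange ▸ hM' : M' ∈ Set.range M)
        exact hM i
      · intro M' hM'
        obtain ⟨i, rfl⟩ := Set.mem_range.mp (hrange ▸ hM' : M' ∈ Set.range M)
        have hle : H ≤ M i := hHeq ▸ iInf_le M i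
        have hdvd : (M i).index ∣ H.index := Subgroup.index_dvd_of_le hle
        rw [hH.1] at hdvd
        have hne0 : (M i).index ≠ 0 := by
          intro h0; rw [h0] at hdvd; omega
        have hne1 : (M i).index ≠ 1 := by
          intro h1
          exact (hM i).1 (Subgroup.index_eq_one.mp h1)
        omega
      · rw [List.map_ofFn]
        apply Nat.le_floor
        calc (((List.ofFn (Subgroup.index ∘ M)).prod : ℕ) : ℝ)
            = ∏ i, (((Subgroup.index ∘ M) i : ℕ) : ℝ) := by
              rw [List.prod_ofFn]; push_cast; rfl
        _ ≤ x := hprod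
      · rw [hrange, sInf_range, hHeq]
    · exact ⟨[], fun h => absurd h hH⟩
  choose f hf using key
  have hfinj : Set.InjOn f S := by
    intro H1 h1 H2 h2 heq
    have e1 := (hf H1 h1).2.2.2
    have e2 := (hf H2 h2).2.2.2
    rw [← e1, ← e2, heq]
  set WF : Finset (List ℕ) := (WSet_finite N).toFinset with hWFdef
  set U : Set (List (Subgroup G)) := ⋃ w ∈ WF, ↑(FibF Mk w) with hUdef
  have hUfin : U.Finite :=
    Set.Finite.biUnion (Finset.finite_toSet _) (fun w _ => (FibF Mk w).finite_toSet)
  have hsub : f '' S ⊆ U := by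
    rintro _ ⟨H, hH, rfl⟩
    obtain ⟨hco, h2le, hprodle, hinf⟩ := hf H hH
    have hwmem : (f H).map Subgroup.index ∈ WF := by
      rw [hWFdef, Set.Finite.mem_toFinset]
      constructor
      · intro d hd
        obtain ⟨M, hM, rfl⟩ := List.mem_map.mp hd
        exact h2le M hM
      · exact hprodle
    exact Set.mem_biUnion hwmem
      (mem_FibF Mk Subgroup.index IsCoatom
        (fun b hb => hMkmem _ b ⟨hb, rfl⟩) (f H) hco)
  have hSfin : S.Finite := Set.Finite.of_finite_image (hUfin.subset hsub) hfinj
  refine ⟨hSfin, ?_⟩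
  -- counting
  have hcount : (S.ncard : ℝ) ≤ ∑ w ∈ WF, ((FibF Mk w).card : ℝ) := by
    have h1 : S.ncard = (f '' S).ncard := (Set.ncard_image_of_injOn hfinj).symm
    have h2 : (f '' S).ncard ≤ U.ncard := Set.ncard_le_ncard hsub hUfin
    have h3 : U.ncard ≤ ∑ w ∈ WF, ((FibF Mk w : Set (List (Subgroup G)))).ncard :=
      ncard_biUnion_le WF _
    have h4 : ∑ w ∈ WF, ((FibF Mk w : Set (List (Subgroup G)))).ncard
        = ∑ w ∈ WF, (FibF Mk w).card := by
      refine Finset.sum_congr rfl fun w _ => Set.ncard_coe_finset _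
    have : S.ncard ≤ ∑ w ∈ WF, (FibF Mk w).card := by omega
    exact_mod_cast this
  have hterm : ∀ w ∈ WF, ((FibF Mk w).card : ℝ) ≤ x ^ α := by
    intro w hw
    rw [hWFdef, Set.Finite.mem_toFinset] at hw
    calc ((FibF Mk w).card : ℝ) ≤ ((w.prod : ℕ) : ℝ) ^ α := card_FibF Mk α hα hMkcard w
    _ ≤ x ^ α := by
        apply Real.rpow_le_rpow (by positivity) ?_ hα
        calc ((w.prod : ℕ) : ℝ) ≤ (N : ℝ) := by exact_mod_cast hw.2
        _ ≤ x := hNx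
  have hsum2 : ∑ w ∈ WF, ((FibF Mk w).card : ℝ) ≤ (WF.card : ℝ) * x ^ α := by
    have := Finset.sum_le_card_nsmul WF (fun w => ((FibF Mk w).card : ℝ)) (x ^ α) hterm
    rwa [nsmul_eq_mul] at this
  have hWFcard : (WF.card : ℝ) ≤ x * (x + 1) / 2 := by
    have h1 : WF.card = (WSet N).ncard := (Set.ncard_eq_toFinset_card _ _).symm
    have h2 := WSet_ncard_le N
    have h3 : (2 : ℝ) * (WF.card : ℝ) ≤ (N:ℝ) * ((N:ℝ) + 1) := by
      rw [h1]; exact_mod_cast h2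
    have hN0 : (0:ℝ) ≤ (N:ℝ) := by positivity
    nlinarith [hNx, hN0, hx1]
  have hxα : (0:ℝ) ≤ x ^ α := Real.rpow_nonneg (by linarith) _
  have hfinal : (S.ncard : ℝ) ≤ (x * (x + 1) / 2) * x ^ α := by
    calc (S.ncard : ℝ) ≤ ∑ w ∈ WF, ((FibF Mk w).card : ℝ) := hcount
    _ ≤ (WF.card : ℝ) * x ^ α := hsum2
    _ ≤ (x * (x + 1) / 2) * x ^ α := mul_le_mul_of_nonneg_right hWFcard hxα
  have hxeq : x ^ α = (n:ℝ) ^ (η * α) := by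
    rw [hxdef, Real.rpow_mul (by linarith)]
  rw [← hxeq]
  exact hfinal
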